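/- Let q be a prime power, let a, b be positive integers with gcd(a,b) = 1, and let S = F_q[x₁,x₂,x₃]. Set f₁ = x₂^{(q−1)b+1}x₃ − x₂x₃^{(q−1)a+1}, f₂ = x₁^{(q−1)b+1}x₃ − x₁x₃^q, f₃ = x₁^{(q−1)a+1}x₂ − x₁x₂^q, and let I = ⟨f₁, f₂, f₃⟩. Define A₁ = −Σ_{i=1}^{a} x₁^{(i−1)(q−1)b} x₂ x₃^{(q−1)a−iq+i} and A₂ = Σ_{i=1}^{b} x₁^{(i−1)(q−1)a} x₂^{(q−1)b−iq+i} x₃, and the S-linear maps φ₂ : S² → S³, (h₁,h₂) ↦ (x₁h₁, A₁h₁ + (x₁^{(q−1)a}x₂ − x₂^q)h₂, A₂h₁ − (x₁^{(q−1)b}x₃ − x₃^q)h₂), and φ₁ : S³ → S, (g₁,g₂,g₃) ↦ g₁f₁ + g₂f₂ + g₃f₃. Then the sequence 0 → S² → S³ → S → S/I → 0 is exact: φ₂ is injective, the image of φ₂ equals the kernel of φ₁, and the image of φ₁ equals I. -/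

import Mathlib

open MvPolynomial

noncomputable section

variable (F : Type) [Field F] [Fintype F]

def f1 (q a b : ℕ) : MvPolynomial (Fin 3) F :=
  X 1 ^ ((q - 1) * b + 1) * X 2 - X 1 * X 2 ^ ((q - 1) * a + 1)

def f2 (q a b : ℕ) : MvPolynomial (Fin 3) F :=
  X 0 ^ ((q - 1) * b + 1) * X 2 - X 0 * X 2 ^ q

def f3 (q a b : ℕ) : MvPolynomial (Fin 3) F :=
  X 0 ^ ((q - 1) * a + 1) * X 1 - X 0 * X 1 ^ q

/-- `A₁ = −Σ_{i=1}^{a} x₁^{(i−1)(q−1)b} x₂ x₃^{(q−1)a−iq+i}`; note that for `1 ≤ i ≤ a`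
the exponent `(q−1)a−iq+i` equals `(a−i)(q−1)`. -/
def A1 (q a b : ℕ) : MvPolynomial (Fin 3) F :=
  - ∑ i ∈ Finset.Icc 1 a, X 0 ^ ((i - 1) * (q - 1) * b) * X 1 * X 2 ^ ((a - i) * (q - 1))

/-- `A₂ = Σ_{i=1}^{b} x₁^{(i−1)(q−1)a} x₂^{(q−1)b−iq+i} x₃`; note that for `1 ≤ i ≤ b`
the exponent `(q−1)b−iq+i` equals `(b−i)(q−1)`. -/
def A2 (q a b : ℕ) : MvPolynomial (Fin 3) F :=
  ∑ i ∈ Finset.Icc 1 b, X 0 ^ ((i - 1) * (q - 1) * a) * X 1 ^ ((b - i) * (q - 1)) * X 2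

/-- The `S`-linear map `φ₂ : S² → S³` given by the matrix with columns
`(x₁, A₁, A₂)` and `(0, f₃/x₁, −f₂/x₁)`. -/
def phi2 (q a b : ℕ) :
    (MvPolynomial (Fin 3) F × MvPolynomial (Fin 3) F) →ₗ[MvPolynomial (Fin 3) F]
      (MvPolynomial (Fin 3) F × MvPolynomial (Fin 3) F × MvPolynomial (Fin 3) F) where
  toFun h := (X 0 * h.1,
      A1 F q a b * h.1 + (X 0 ^ ((q - 1) * a) * X 1 - X 1 ^ q) * h.2,
      A2 F q a b * h.1 - (X 0 ^ ((q - 1) * b) * X 2 - X 2 ^ q) * h.2)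
  map_add' x y := by
    refine Prod.ext ?_ (Prod.ext ?_ ?_) <;> simp <;> ring
  map_smul' c x := by
    refine Prod.ext ?_ (Prod.ext ?_ ?_) <;> simp [smul_eq_mul] <;> ring

/-- The `S`-linear map `φ₁ : S³ → S`, `(g₁,g₂,g₃) ↦ g₁f₁ + g₂f₂ + g₃f₃`. -/
def phi1 (q a b : ℕ) :
    (MvPolynomial (Fin 3) F × MvPolynomial (Fin 3) F × MvPolynomial (Fin 3) F)
      →ₗ[MvPolynomial (Fin 3) F] MvPolynomial (Fin 3) F where
  toFun g := g.1 * f1 F q a b + g.2.1 * f2 F q a b + g.2.2 * f3 F q a b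
  map_add' x y := by simp; ring
  map_smul' c x := by simp [smul_eq_mul]; ring


/-! ### Auxiliary lemmas -/

section Aux

variable (F : Type) [Field F]

lemma A1_mul_aux (q a b : ℕ) (hq : 1 ≤ q) :
    A1 F q a b * (X 0 ^ ((q - 1) * b) * X 2 - X 2 ^ q) =
      X 1 * X 2 ^ (a * (q - 1) + 1) - X 0 ^ (a * ((q - 1) * b)) * X 1 * X 2 := by
  obtain ⟨e, rfl⟩ : ∃ e, q = e + 1 := ⟨q - 1, by omega⟩
  simp only [A1, Nat.add_sub_cancel]
  set T : ℕ → MvPolynomial (Fin 3) F :=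
    fun j => X 0 ^ (j * (e * b)) * X 1 * X 2 ^ ((a - j) * e + 1) with hT
  have main : ∑ i ∈ Finset.Icc 1 a,
      (X 0 ^ ((i - 1) * e * b) * X 1 * X 2 ^ ((a - i) * e)) *
        (X 0 ^ (e * b) * X 2 - X 2 ^ (e + 1)) = T a - T 0 := by
    rw [← Finset.Ico_add_one_right_eq_Icc, Finset.sum_Ico_eq_sum_range, ← Finset.sum_range_sub T a]
    apply Finset.sum_congr
    · norm_num
    intro j hj
    have hj' : j < a := by simp at hj; omega
    have e1 : 1 + j - 1 = j := by omega
    have e2 : a - (1 + j) = a - 1 - j := by omega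
    have e2' : a - (j + 1) = a - 1 - j := by omega
    have e3 : a - j = (a - 1 - j) + 1 := by omega
    rw [hT]
    simp only [e1, e2, e2', e3]
    ring
  rw [neg_mul, Finset.sum_mul, main, hT]
  simp only [Nat.sub_self, zero_mul, pow_zero, one_mul, Nat.sub_zero]
  ring

lemma A2_mul_aux (q a b : ℕ) (hq : 1 ≤ q) :
    A2 F q a b * (X 0 ^ ((q - 1) * a) * X 1 - X 1 ^ q) =
      X 0 ^ (b * ((q - 1) * a)) * X 1 * X 2 - X 1 ^ (b * (q - 1) + 1) * X 2 := by
  obtain ⟨e, rfl⟩ : ∃ e, q = e + 1 := ⟨q - 1, by omega⟩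
  simp only [A2, Nat.add_sub_cancel]
  set T : ℕ → MvPolynomial (Fin 3) F :=
    fun j => X 0 ^ (j * (e * a)) * X 1 ^ ((b - j) * e + 1) * X 2 with hT
  have main : ∑ i ∈ Finset.Icc 1 b,
      (X 0 ^ ((i - 1) * e * a) * X 1 ^ ((b - i) * e) * X 2) *
        (X 0 ^ (e * a) * X 1 - X 1 ^ (e + 1)) = T b - T 0 := by
    rw [← Finset.Ico_add_one_right_eq_Icc, Finset.sum_Ico_eq_sum_range, ← Finset.sum_range_sub T b]
    apply Finset.sum_congr
    · norm_num
    intro j hj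
    have hj' : j < b := by simp at hj; omega
    have e1 : 1 + j - 1 = j := by omega
    have e2 : b - (1 + j) = b - 1 - j := by omega
    have e2' : b - (j + 1) = b - 1 - j := by omega
    have e3 : b - j = (b - 1 - j) + 1 := by omega
    rw [hT]
    simp only [e1, e2, e2', e3]
    ring
  rw [Finset.sum_mul, main, hT]
  simp only [Nat.sub_self, zero_mul, pow_zero, one_mul, Nat.sub_zero]
  ring

/-- The key first-column relation. -/
lemma key_rel (q a b : ℕ) (hq : 1 ≤ q) :
    f1 F q a b + A1 F q a b * (X 0 ^ ((q - 1) * b) * X 2 - X 2 ^ q)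
      + A2 F q a b * (X 0 ^ ((q - 1) * a) * X 1 - X 1 ^ q) = 0 := by
  rw [A1_mul_aux F q a b hq, A2_mul_aux F q a b hq, f1]
  ring

lemma hf2_aux (q a b : ℕ) :
    f2 F q a b = X 0 * (X 0 ^ ((q - 1) * b) * X 2 - X 2 ^ q) := by
  rw [f2, pow_succ]; ring

lemma hf3_aux (q a b : ℕ) :
    f3 F q a b = X 0 * (X 0 ^ ((q - 1) * a) * X 1 - X 1 ^ q) := by
  rw [f3, pow_succ]; ring

lemma phi1_apply (q a b : ℕ) (g) :
    phi1 F q a b g = g.1 * f1 F q a b + g.2.1 * f2 F q a b + g.2.2 * f3 F q a b := rfl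

lemma phi2_apply (q a b : ℕ) (h) :
    phi2 F q a b h = (X 0 * h.1,
      A1 F q a b * h.1 + (X 0 ^ ((q - 1) * a) * X 1 - X 1 ^ q) * h.2,
      A2 F q a b * h.1 - (X 0 ^ ((q - 1) * b) * X 2 - X 2 ^ q) * h.2) := rfl

lemma mono_sub_ne {σ : Type} [DecidableEq σ] (s t : σ →₀ ℕ) (h : s ≠ t) :
    (monomial s (1 : F)) - monomial t 1 ≠ 0 := by
  intro H
  have hc := congrArg (coeff s) H
  rw [coeff_sub, coeff_monomial, coeff_monomial, if_pos rfl, if_neg (Ne.symm h)] at hc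
  simp at hc

/-- Division step: in a domain, if `p * c = m * z` with `m` monic and `c` a nonzero
polynomial of degree ≤ 0, then `m ∣ p`. -/
lemma poly_dvd_aux {R : Type} [CommRing R] [IsDomain R] {m p c z : Polynomial R}
    (hm : m.Monic) (hc : c ≠ 0) (hcdeg : c.degree ≤ 0) (hrel : p * c = m * z) :
    m ∣ p := by
  have hdiv := Polynomial.modByMonic_add_div p m
  set t := p %ₘ m with ht
  have htc : t * c = m * (z - (p /ₘ m) * c) := by
    have : p = t + m * (p /ₘ m) := by rw [ht, hdiv]
    rw [this] at hrel
    linear_combination hrel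
  rcases eq_or_ne t 0 with h0 | h0
  · exact (Polynomial.modByMonic_eq_zero_iff_dvd hm).mp h0
  · exfalso
    have htc0 : t * c ≠ 0 := mul_ne_zero h0 hc
    have hdvd : m ∣ t * c := Dvd.intro _ htc.symm
    have h1 : m.degree ≤ (t * c).degree := Polynomial.degree_le_of_dvd hdvd htc0
    have h2 : (t * c).degree = t.degree + c.degree := Polynomial.degree_mul
    have h3 : t.degree + c.degree ≤ t.degree := by
      calc t.degree + c.degree ≤ t.degree + 0 := add_le_add_right hcdeg _
      _ = t.degree := add_zero _
    have h4 : t.degree < m.degree := Polynomial.degree_modByMonic_lt p hm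
    rw [h2] at h1
    exact absurd ((h1.trans h3).trans_lt h4) (lt_irrefl _)

/-- The transfer map `S ≃ₐ[F] (F[x₀,x₂])[x₁]` (after swapping variables 0 and 1). -/
def Phi : MvPolynomial (Fin 3) F ≃ₐ[F] Polynomial (MvPolynomial (Fin 2) F) :=
  (renameEquiv F (Equiv.swap 0 1)).trans (MvPolynomial.finSuccEquiv F 2)

lemma Phi_X0 : Phi F (X 0) = Polynomial.C (X 0) := by
  have h1 : ((0 : Fin 2).succ : Fin 3) = 1 := rfl
  simp only [Phi, AlgEquiv.trans_apply, renameEquiv_apply, rename_X, Equiv.swap_apply_left]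
  rw [← h1, finSuccEquiv_X_succ]

lemma Phi_X1 : Phi F (X 1) = Polynomial.X := by
  simp only [Phi, AlgEquiv.trans_apply, renameEquiv_apply, rename_X, Equiv.swap_apply_right]
  rw [finSuccEquiv_X_zero]

lemma Phi_X2 : Phi F (X 2) = Polynomial.C (X 1) := by
  have h1 : ((1 : Fin 2).succ : Fin 3) = 2 := rfl
  have h2 : (Equiv.swap (0 : Fin 3) 1) 2 = 2 := by decide
  simp only [Phi, AlgEquiv.trans_apply, renameEquiv_apply, rename_X, h2]
  rw [← h1, finSuccEquiv_X_succ]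

lemma Phi_uu (q a : ℕ) :
    Phi F (X 0 ^ ((q - 1) * a) * X 1 - X 1 ^ q) =
      -(Polynomial.X ^ q - Polynomial.C ((X 0 : MvPolynomial (Fin 2) F) ^ ((q - 1) * a)) * Polynomial.X) := by
  rw [map_sub, map_mul, map_pow, map_pow, Phi_X0, Phi_X1, ← map_pow]
  ring

lemma Phi_vv (q b : ℕ) :
    Phi F (X 0 ^ ((q - 1) * b) * X 2 - X 2 ^ q) =
      Polynomial.C ((X 0 : MvPolynomial (Fin 2) F) ^ ((q - 1) * b) * X 1 - X 1 ^ q) := by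
  rw [map_sub, map_mul, map_pow, map_pow, Phi_X0, Phi_X2, ← map_pow, ← map_pow, ← map_mul, ← map_sub]

lemma monic_m (q a : ℕ) (hq : 2 ≤ q) :
    (Polynomial.X ^ q - Polynomial.C ((X 0 : MvPolynomial (Fin 2) F) ^ ((q - 1) * a)) * Polynomial.X).Monic := by
  apply Polynomial.monic_X_pow_sub
  have h1 : (Polynomial.C ((X 0 : MvPolynomial (Fin 2) F) ^ ((q - 1) * a)) * Polynomial.X).degree
      ≤ (1 : WithBot ℕ) := by
    calc (Polynomial.C ((X 0 : MvPolynomial (Fin 2) F) ^ ((q - 1) * a)) * Polynomial.X).degree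
        ≤ (Polynomial.C ((X 0 : MvPolynomial (Fin 2) F) ^ ((q - 1) * a))).degree + Polynomial.X.degree :=
          Polynomial.degree_mul_le _ _
      _ ≤ 0 + 1 := add_le_add Polynomial.degree_C_le (le_of_eq Polynomial.degree_X)
      _ = (1 : WithBot ℕ) := by norm_num
  refine lt_of_le_of_lt h1 ?_
  have h2 : (1 : ℕ) < q := hq
  exact_mod_cast h2

lemma uu_ne_zero (q a : ℕ) (hq : 2 ≤ q) (ha : 0 < a) :
    (X 0 ^ ((q - 1) * a) * X 1 - (X 1 : MvPolynomial (Fin 3) F) ^ q) ≠ 0 := by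
  have h : (X 0 ^ ((q - 1) * a) * X 1 - (X 1 : MvPolynomial (Fin 3) F) ^ q) =
      monomial (Finsupp.single 0 ((q - 1) * a) + Finsupp.single 1 1) 1 -
        monomial (Finsupp.single 1 q) 1 := by
    rw [X_pow_eq_monomial, X_pow_eq_monomial]
    rw [show (X 1 : MvPolynomial (Fin 3) F) = monomial (Finsupp.single 1 1) 1 from rfl]
    rw [monomial_mul, mul_one]
  rw [h]
  apply mono_sub_ne
  intro hst
  have := congrArg (fun f => f 0) hst
  simp [Finsupp.single_apply] at this
  omega

lemma vv_ne_zero' (q b : ℕ) (hq : 2 ≤ q) (hb : 0 < b) :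
    ((X 0 : MvPolynomial (Fin 2) F) ^ ((q - 1) * b) * X 1 - X 1 ^ q) ≠ 0 := by
  have h : ((X 0 : MvPolynomial (Fin 2) F) ^ ((q - 1) * b) * X 1 - X 1 ^ q) =
      monomial (Finsupp.single 0 ((q - 1) * b) + Finsupp.single 1 1) 1 -
        monomial (Finsupp.single 1 q) 1 := by
    rw [X_pow_eq_monomial, X_pow_eq_monomial]
    rw [show (X 1 : MvPolynomial (Fin 2) F) = monomial (Finsupp.single 1 1) 1 from rfl]
    rw [monomial_mul, mul_one]
  rw [h]
  apply mono_sub_ne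
  intro hst
  have := congrArg (fun f => f 0) hst
  simp [Finsupp.single_apply] at this
  omega

lemma vv_ne_zero (q b : ℕ) (hq : 2 ≤ q) (hb : 0 < b) :
    (X 0 ^ ((q - 1) * b) * X 2 - (X 2 : MvPolynomial (Fin 3) F) ^ q) ≠ 0 := by
  intro h0
  have := congrArg (Phi F) h0
  rw [Phi_vv, map_zero] at this
  exact vv_ne_zero' F q b hq hb (Polynomial.C_injective (by simpa using this))

/-- The crucial divisibility: from `r₂ v + r₃ u = 0` conclude `u ∣ r₂`. -/
lemma uu_dvd (q a b : ℕ) (hq : 2 ≤ q) (ha : 0 < a) (hb : 0 < b)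
    {r₂ r₃ : MvPolynomial (Fin 3) F}
    (hrel : r₂ * (X 0 ^ ((q - 1) * b) * X 2 - X 2 ^ q)
      + r₃ * (X 0 ^ ((q - 1) * a) * X 1 - X 1 ^ q) = 0) :
    (X 0 ^ ((q - 1) * a) * X 1 - (X 1 : MvPolynomial (Fin 3) F) ^ q) ∣ r₂ := by
  set m : Polynomial (MvPolynomial (Fin 2) F) :=
    Polynomial.X ^ q - Polynomial.C ((X 0 : MvPolynomial (Fin 2) F) ^ ((q - 1) * a)) * Polynomial.X with hm
  set w : MvPolynomial (Fin 2) F :=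
    (X 0 : MvPolynomial (Fin 2) F) ^ ((q - 1) * b) * X 1 - X 1 ^ q with hw
  have hmonic : m.Monic := monic_m F q a hq
  have hwne : w ≠ 0 := vv_ne_zero' F q b hq hb
  have htr := congrArg (Phi F) hrel
  rw [map_add, map_mul, map_mul, Phi_uu, Phi_vv, map_zero] at htr
  have hrel2 : Phi F r₂ * Polynomial.C w = m * Phi F r₃ := by linear_combination htr
  have hdvd : m ∣ Phi F r₂ :=
    poly_dvd_aux hmonic (by simpa using hwne) Polynomial.degree_C_le hrel2
  have hdvd2 : Phi F (X 0 ^ ((q - 1) * a) * X 1 - X 1 ^ q) ∣ Phi F r₂ := by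
    rw [Phi_uu]; exact (neg_dvd).mpr hdvd
  have := map_dvd (Phi F).symm hdvd2
  simpa using this

end Aux

/-- Theorem (minimal free resolution for `ℙ(1,a,b)`): the sequence
`0 → S² → S³ → S → S/I → 0` is exact. -/
theorem resolution_P1ab_exact (q : ℕ) (hq : q = Fintype.card F) (a b : ℕ)
    (ha : 0 < a) (hb : 0 < b) (hab : Nat.gcd a b = 1) :
    Function.Injective (phi2 F q a b) ∧
    LinearMap.range (phi2 F q a b) = LinearMap.ker (phi1 F q a b) ∧
    LinearMap.range (phi1 F q a b) =
      Ideal.span {f1 F q a b, f2 F q a b, f3 F q a b} := by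
  have hq2 : 2 ≤ q := by rw [hq]; exact Fintype.one_lt_card
  have hq1 : 1 ≤ q := by omega
  set u : MvPolynomial (Fin 3) F := X 0 ^ ((q - 1) * a) * X 1 - X 1 ^ q with hu
  set v : MvPolynomial (Fin 3) F := X 0 ^ ((q - 1) * b) * X 2 - X 2 ^ q with hv
  have hX0 : (X 0 : MvPolynomial (Fin 3) F) ≠ 0 := X_ne_zero 0
  have huz : u ≠ 0 := uu_ne_zero F q a hq2 ha
  have K := key_rel F q a b hq1
  refine ⟨?_, ?_, ?_⟩
  · -- injectivity
    intro x y hxy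
    rw [phi2_apply, phi2_apply] at hxy
    have h1 : X 0 * x.1 = X 0 * y.1 := congrArg Prod.fst hxy
    have hx1 : x.1 = y.1 := mul_left_cancel₀ hX0 h1
    have h2 : A1 F q a b * x.1 + u * x.2 = A1 F q a b * y.1 + u * y.2 :=
      congrArg (fun p => p.2.1) hxy
    rw [hx1] at h2
    have h2' : u * x.2 = u * y.2 := by linear_combination h2
    exact Prod.ext hx1 (mul_left_cancel₀ huz h2')
  · -- range phi2 = ker phi1
    apply le_antisymm
    · rintro _ ⟨h, rfl⟩
      rw [LinearMap.mem_ker, phi1_apply, phi2_apply]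
      rw [hf2_aux, hf3_aux]
      linear_combination (X 0 * h.1) * K
    · rintro g hg
      rw [LinearMap.mem_ker, phi1_apply] at hg
      -- Step A : X 0 ∣ g.1
      set ψ := MvPolynomial.finSuccEquiv F 2 with hψ
      have hzz : g.1 * f1 F q a b = X 0 * (-(g.2.1 * v + g.2.2 * u)) := by
        rw [hf2_aux, hf3_aux] at hg
        linear_combination hg
      have hψ0 : ψ (X 0) = Polynomial.X := finSuccEquiv_X_zero
      have hψ1 : ψ (X 1) = Polynomial.C (X 0) := by
        rw [show (1 : Fin 3) = (0 : Fin 2).succ from rfl, finSuccEquiv_X_succ]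
      have hψ2 : ψ (X 2) = Polynomial.C (X 1) := by
        rw [show (2 : Fin 3) = (1 : Fin 2).succ from rfl, finSuccEquiv_X_succ]
      set w1 : MvPolynomial (Fin 2) F :=
        X 0 ^ ((q - 1) * b + 1) * X 1 - X 0 * X 1 ^ ((q - 1) * a + 1) with hw1
      have hψf1 : ψ (f1 F q a b) = Polynomial.C w1 := by
        rw [f1, map_sub, map_mul, map_mul, map_pow, map_pow, hψ1, hψ2, hw1]
        rw [← map_pow, ← map_pow, ← map_mul, ← map_mul, ← map_sub]
      have hw1ne : w1 ≠ 0 := by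
        rw [hw1]
        have h : (X 0 ^ ((q - 1) * b + 1) * X 1 - X 0 * X 1 ^ ((q - 1) * a + 1)
            : MvPolynomial (Fin 2) F) =
            monomial (Finsupp.single 0 ((q - 1) * b + 1) + Finsupp.single 1 1) 1 -
              monomial (Finsupp.single 0 1 + Finsupp.single 1 ((q - 1) * a + 1)) 1 := by
          rw [X_pow_eq_monomial, X_pow_eq_monomial,
            show (X 1 : MvPolynomial (Fin 2) F) = monomial (Finsupp.single 1 1) 1 from rfl,
            show (X 0 : MvPolynomial (Fin 2) F) = monomial (Finsupp.single 0 1) 1 from rfl,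
            monomial_mul, monomial_mul, mul_one]
        rw [h]
        apply mono_sub_ne
        intro hst
        have := congrArg (fun f => f 0) hst
        have hb1 : 1 ≤ (q - 1) * b := by
          have : 1 ≤ q - 1 := by omega
          calc 1 = 1 * 1 := by norm_num
          _ ≤ (q - 1) * b := Nat.mul_le_mul this hb
        simp [Finsupp.single_apply] at this
        omega
      have htr := congrArg ψ hzz
      rw [map_mul, map_mul, hψf1, hψ0] at htr
      have hc0 : (ψ g.1).coeff 0 * w1 = 0 := by
        have := congrArg (fun p => Polynomial.coeff p 0) htr
        simpa [Polynomial.coeff_mul_C, Polynomial.mul_coeff_zero] using this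
      have hXdvd : Polynomial.X ∣ ψ g.1 :=
        Polynomial.X_dvd_iff.mpr ((mul_eq_zero.mp hc0).resolve_right hw1ne)
      obtain ⟨p, hp⟩ := hXdvd
      set h₁ : MvPolynomial (Fin 3) F := ψ.symm p with hh₁def
      have hg1 : g.1 = X 0 * h₁ := by
        have : ψ.symm (ψ g.1) = ψ.symm (Polynomial.X * p) := congrArg ψ.symm hp
        rw [AlgEquiv.symm_apply_apply, map_mul] at this
        rw [this, hh₁def]
        congr 1
        rw [← hψ0, AlgEquiv.symm_apply_apply]
      -- Step B : the reduced relation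
      set r₂ : MvPolynomial (Fin 3) F := g.2.1 - A1 F q a b * h₁ with hr₂
      set r₃ : MvPolynomial (Fin 3) F := g.2.2 - A2 F q a b * h₁ with hr₃
      have h0 : X 0 * (r₂ * v + r₃ * u) = X 0 * 0 := by
        rw [hf2_aux, hf3_aux, hg1] at hg
        rw [mul_zero, hr₂, hr₃]
        linear_combination hg - (X 0 * h₁) * K
      have hrel : r₂ * v + r₃ * u = 0 := mul_left_cancel₀ hX0 h0
      -- Step C : u ∣ r₂
      obtain ⟨h₂, hh₂⟩ := uu_dvd F q a b hq2 ha hb hrel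
      -- Step D : conclude
      have hr3eq : r₃ = -(v * h₂) := by
        have : u * (h₂ * v + r₃) = u * 0 := by
          rw [mul_zero]
          linear_combination hrel - v * hh₂
        have := mul_left_cancel₀ huz this
        linear_combination this
      refine ⟨(h₁, h₂), ?_⟩
      rw [phi2_apply]
      refine Prod.ext hg1.symm (Prod.ext ?_ ?_)
      · show A1 F q a b * h₁ + u * h₂ = g.2.1
        linear_combination -hh₂ - hr₂
      · show A2 F q a b * h₁ - v * h₂ = g.2.2
        linear_combination -hr3eq - hr₃
  · -- range phi1 = span
    apply le_antisymm
    · rintro _ ⟨g, rfl⟩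
      rw [phi1_apply]
      have m1 : f1 F q a b ∈ Ideal.span {f1 F q a b, f2 F q a b, f3 F q a b} :=
        Ideal.subset_span (by simp)
      have m2 : f2 F q a b ∈ Ideal.span {f1 F q a b, f2 F q a b, f3 F q a b} :=
        Ideal.subset_span (by simp)
      have m3 : f3 F q a b ∈ Ideal.span {f1 F q a b, f2 F q a b, f3 F q a b} :=
        Ideal.subset_span (by simp)
      exact Ideal.add_mem _ (Ideal.add_mem _ (Ideal.mul_mem_left _ _ m1)
        (Ideal.mul_mem_left _ _ m2)) (Ideal.mul_mem_left _ _ m3)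
    · rw [Ideal.span_le]
      rintro x hx
      simp only [Set.mem_insert_iff, Set.mem_singleton_iff] at hx
      rcases hx with rfl | rfl | rfl
      · exact ⟨(1, 0, 0), by rw [phi1_apply]; ring⟩
      · exact ⟨(0, 1, 0), by rw [phi1_apply]; ring⟩
      · exact ⟨(0, 0, 1), by rw [phi1_apply]; ring⟩


end
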